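/- Let (W,S) be a Coxeter system. Call w ∈ W separated if no simple reflection appearing in some (equivalently any) reduced expression of P_↓(w) belongs to D_L(w) or D_R(w), where P_↓(w) is the minimal double coset representative of W_{D_L(w)} w W_{D_R(w)}. If w is separated, then B_↓(w) = [e, P_↓(w)]; i.e. the set of minimal double coset representatives in [e,w] equals the lower interval below P_↓(w). -/

import Mathlib

open CoxeterSystem List

variable {B W : Type*} [Group W] {M : CoxeterMatrix B}

namespace CoxeterBruhat

/-- One edge in the Bruhat graph: `v = t * u` for a reflection `t`, with `ℓ(u) < ℓ(v)`. -/
def Step (cs : CoxeterSystem M W) (u v : W) : Prop :=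
  ∃ t : W, cs.IsReflection t ∧ v = t * u ∧ cs.length u < cs.length v

/-- The Bruhat order, as the reflexive-transitive closure of `Step`. -/
def BruhatLE (cs : CoxeterSystem M W) : W → W → Prop :=
  Relation.ReflTransGen (Step cs)

/-- The standard parabolic subgroup generated by the simple reflections indexed by `I`. -/
def parabolic (cs : CoxeterSystem M W) (I : Set B) : Subgroup W :=
  Subgroup.closure (cs.simple '' I)

/-- The left descent set `D_L(w)`. -/
def leftDescents (cs : CoxeterSystem M W) (w : W) : Set B :=
  {i | cs.IsLeftDescent w i}

/-- The right descent set `D_R(w)`. -/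
def rightDescents (cs : CoxeterSystem M W) (w : W) : Set B :=
  {i | cs.IsRightDescent w i}

/-- The double coset `W_I u W_J` as a set. -/
def doubleCoset (cs : CoxeterSystem M W) (I J : Set B) (u : W) : Set W :=
  {v | ∃ x ∈ parabolic cs I, ∃ y ∈ parabolic cs J, v = x * u * y}

/-- The Bruhat coset `C_w(u) = W_{D_L(w)} u W_{D_R(w)}`. -/
def bCoset (cs : CoxeterSystem M W) (w u : W) : Set W :=
  doubleCoset cs (leftDescents cs w) (rightDescents cs w) u

/-- The lower Bruhat interval `B(w) = [e, w]`. -/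
def lowerInterval (cs : CoxeterSystem M W) (w : W) : Set W :=
  {v | BruhatLE cs v w}

/-- The support `S(v)` of `v`: simple reflections below `v` in Bruhat order. -/
def support (cs : CoxeterSystem M W) (v : W) : Set B :=
  {i | BruhatLE cs (cs.simple i) v}

/-! ## Auxiliary development -/

noncomputable local instance : DecidableEq W := Classical.decEq W

section Eta

variable (cs : CoxeterSystem M W)

private lemma conj_eq_iff {g x y : W} : g * x * g⁻¹ = y ↔ x = g⁻¹ * y * g := by
  constructor
  · rintro rfl; group
  · rintro rfl; group

private lemma simple_conj_conj (i : B) (t : W) :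
    cs.simple i * (cs.simple i * t * cs.simple i) * cs.simple i = t := by
  simp only [mul_assoc]
  rw [cs.simple_mul_simple_self, mul_one, cs.simple_mul_simple_cancel_left]

private lemma simple_conj_eq_iff (i : B) (t x : W) :
    cs.simple i * t * cs.simple i = x ↔ t = cs.simple i * x * cs.simple i :=
  ⟨fun h => by rw [← h, simple_conj_conj], fun h => by rw [h, simple_conj_conj]⟩

/-- The basic sign-flipping map. -/
noncomputable def sigmaFun (i : B) : W × ℤˣ → W × ℤˣ :=
  fun p => (cs.simple i * p.1 * cs.simple i, (if p.1 = cs.simple i then (-1 : ℤˣ) else 1) * p.2)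

lemma sigmaFun_involutive (i : B) : Function.Involutive (sigmaFun cs i) := by
  rintro ⟨t, ε⟩
  simp only [sigmaFun, simple_conj_conj]
  refine Prod.ext rfl ?_
  simp only
  have hc : (cs.simple i * t * cs.simple i = cs.simple i) ↔ (t = cs.simple i) := by
    constructor
    · intro h
      have := (simple_conj_eq_iff cs i t _).mp h
      rwa [cs.simple_mul_simple_self, one_mul] at this
    · intro h
      rw [h, cs.simple_mul_simple_self, one_mul]
  simp only [hc]
  by_cases h : t = cs.simple i <;> simp [h]

/-- The sign-flipping permutation attached to a simple reflection. -/
noncomputable def sigmaPerm (i : B) : Equiv.Perm (W × ℤˣ) :=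
  Function.Involutive.toPerm _ (sigmaFun_involutive cs i)

@[simp] lemma sigmaPerm_apply (i : B) (p : W × ℤˣ) :
    sigmaPerm cs i p =
      (cs.simple i * p.1 * cs.simple i, (if p.1 = cs.simple i then (-1 : ℤˣ) else 1) * p.2) := rfl

private lemma dshift (i i' : B) (j : ℕ) :
    (cs.simple i * cs.simple i')⁻¹ * ((cs.simple i' * cs.simple i) ^ j * cs.simple i') *
      (cs.simple i * cs.simple i') = (cs.simple i' * cs.simple i) ^ (j + 2) * cs.simple i' := by
  induction j with
  | zero =>
    simp only [pow_zero, one_mul, mul_inv_rev, cs.inv_simple]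
    simp only [pow_succ, pow_zero, one_mul, mul_assoc]
  | succ j ihj =>
    have key : (cs.simple i * cs.simple i')⁻¹ *
          ((cs.simple i' * cs.simple i) ^ (j + 1) * cs.simple i') *
          (cs.simple i * cs.simple i')
        = (cs.simple i' * cs.simple i) *
          ((cs.simple i * cs.simple i')⁻¹ * ((cs.simple i' * cs.simple i) ^ j * cs.simple i') *
            (cs.simple i * cs.simple i')) := by
      simp only [pow_succ', mul_inv_rev, cs.inv_simple, mul_assoc,
        cs.simple_mul_simple_cancel_left]
    rw [key, ihj]
    have h2 : j + 1 + 2 = (j + 2) + 1 := by omega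
    rw [h2]
    conv_rhs => rw [pow_succ', mul_assoc]

private lemma sigma_mul_pow_apply (i i' : B) (k : ℕ) (t : W) (ε : ℤˣ) :
    ((sigmaPerm cs i * sigmaPerm cs i') ^ k) (t, ε) =
      ((cs.simple i * cs.simple i') ^ k * t * ((cs.simple i * cs.simple i') ^ k)⁻¹,
        (∏ j ∈ Finset.range (2 * k),
          (if t = (cs.simple i' * cs.simple i) ^ j * cs.simple i' then (-1 : ℤˣ) else 1)) * ε) := by
  induction k generalizing t ε with
  | zero => simp
  | succ k ih =>
    rw [pow_succ, Equiv.Perm.mul_apply]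
    have hpair : (sigmaPerm cs i * sigmaPerm cs i') (t, ε) =
        (cs.simple i * (cs.simple i' * t * cs.simple i') * cs.simple i,
          ((if t = (cs.simple i' * cs.simple i) ^ 1 * cs.simple i' then (-1 : ℤˣ) else 1) *
            (if t = (cs.simple i' * cs.simple i) ^ 0 * cs.simple i' then (-1 : ℤˣ) else 1)) * ε) := by
      rw [Equiv.Perm.mul_apply, sigmaPerm_apply, sigmaPerm_apply]
      refine Prod.ext rfl ?_
      simp only [pow_zero, pow_one, one_mul]
      have hc : (cs.simple i' * t * cs.simple i' = cs.simple i) ↔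
          (t = cs.simple i' * cs.simple i * cs.simple i') := by
        rw [simple_conj_eq_iff]
      simp only [hc]
      by_cases h1 : t = cs.simple i' * cs.simple i * cs.simple i' <;>
        by_cases h2 : t = cs.simple i' <;>
        simp [h1, h2, mul_comm, mul_left_comm, mul_assoc] <;>
        split_ifs <;> simp
    rw [hpair, ih]
    have hX : ∀ j : ℕ,
        (cs.simple i * (cs.simple i' * t * cs.simple i') * cs.simple i
          = (cs.simple i' * cs.simple i) ^ j * cs.simple i') ↔
        (t = (cs.simple i' * cs.simple i) ^ (j + 2) * cs.simple i') := by
      intro j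
      have hX0 : cs.simple i * (cs.simple i' * t * cs.simple i') * cs.simple i
          = (cs.simple i * cs.simple i') * t * (cs.simple i * cs.simple i')⁻¹ := by
        simp [mul_inv_rev, cs.inv_simple, mul_assoc]
      rw [hX0, conj_eq_iff, dshift]
    refine Prod.ext ?_ ?_
    · simp only
      simp only [pow_succ, mul_inv_rev, cs.inv_simple, mul_assoc]
    · simp only
      have hprod : (∏ j ∈ Finset.range (2 * k),
            (if cs.simple i * (cs.simple i' * t * cs.simple i') * cs.simple i
              = (cs.simple i' * cs.simple i) ^ j * cs.simple i' then (-1 : ℤˣ) else 1))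
          = ∏ j ∈ Finset.range (2 * k),
            (if t = (cs.simple i' * cs.simple i) ^ (j + 2) * cs.simple i'
              then (-1 : ℤˣ) else 1) := by
        refine Finset.prod_congr rfl (fun j _ => ?_)
        rw [if_congr (hX j) rfl rfl]
      rw [hprod]
      have h2 : 2 * (k + 1) = (2 * k + 1) + 1 := by omega
      rw [h2, Finset.prod_range_succ', Finset.prod_range_succ']
      simp only [pow_zero, one_mul]
      generalize (∏ j ∈ Finset.range (2 * k),
        (if t = (cs.simple i' * cs.simple i) ^ (j + 1 + 1) * cs.simple i'
          then (-1 : ℤˣ) else 1)) = P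
      generalize (if t = (cs.simple i' * cs.simple i) ^ 1 * cs.simple i'
          then (-1 : ℤˣ) else 1) = Q1 at *
      generalize (if t = cs.simple i' then (-1:ℤˣ) else 1) = Q0 at *
      -- goal : P * (Q1 * Q0 * ε) = P * Q1 * Q0 * ε
      simp [mul_assoc]

lemma isLiftable_sigmaPerm : M.IsLiftable (fun i => sigmaPerm cs i) := by
  intro i i'
  apply Equiv.ext
  rintro ⟨t, ε⟩
  rw [Equiv.Perm.one_apply]
  rw [sigma_mul_pow_apply]
  rw [cs.simple_mul_simple_pow]
  refine Prod.ext (by simp) ?_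
  simp only
  have h2 : 2 * M i i' = M i i' + M i i' := by omega
  rw [h2, Finset.prod_range_add]
  have hshift : ∀ j : ℕ,
      (if t = (cs.simple i' * cs.simple i) ^ (M i i' + j) * cs.simple i' then (-1 : ℤˣ) else 1)
      = (if t = (cs.simple i' * cs.simple i) ^ j * cs.simple i' then (-1 : ℤˣ) else 1) := by
    intro j
    have : (cs.simple i' * cs.simple i) ^ (M i i' + j)
        = (cs.simple i' * cs.simple i) ^ j := by
      rw [pow_add, cs.simple_mul_simple_pow', one_mul]
    rw [this]
  have : (∏ j ∈ Finset.range (M i i'),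
      (if t = (cs.simple i' * cs.simple i) ^ (M i i' + j) * cs.simple i' then (-1 : ℤˣ) else 1))
      = ∏ j ∈ Finset.range (M i i'),
      (if t = (cs.simple i' * cs.simple i) ^ j * cs.simple i' then (-1 : ℤˣ) else 1) :=
    Finset.prod_congr rfl (fun j _ => hshift j)
  rw [this, Int.units_mul_self, one_mul]

/-- The sign homomorphism `W →* Perm (W × ℤˣ)`. -/
noncomputable def phi : W →* Equiv.Perm (W × ℤˣ) :=
  cs.lift ⟨fun i => sigmaPerm cs i, isLiftable_sigmaPerm cs⟩

lemma phi_simple (i : B) : phi cs (cs.simple i) = sigmaPerm cs i :=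
  cs.lift_apply_simple _ i

/-- The sign cocycle. -/
noncomputable def eta (g t : W) : ℤˣ := ((phi cs g) (t, 1)).2

private lemma ris_cons (i : B) (ω : List B) : cs.rightInvSeq (i :: ω) =
    ((cs.wordProd ω)⁻¹ * cs.simple i * cs.wordProd ω) :: cs.rightInvSeq ω := rfl

lemma phi_wordProd (ω : List B) (t : W) (ε : ℤˣ) :
    (phi cs (cs.wordProd ω)) (t, ε) =
      (cs.wordProd ω * t * (cs.wordProd ω)⁻¹,
        (-1 : ℤˣ) ^ ((cs.rightInvSeq ω).count t) * ε) := by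
  induction ω generalizing t ε with
  | nil => simp [cs.wordProd_nil]
  | cons i ω ih =>
    rw [cs.wordProd_cons, map_mul, Equiv.Perm.mul_apply, ih, phi_simple, sigmaPerm_apply]
    refine Prod.ext ?_ ?_
    · simp only
      simp only [mul_inv_rev, cs.inv_simple, mul_assoc]
    · simp only
      rw [ris_cons]
      have hcount : ((cs.wordProd ω)⁻¹ * cs.simple i * cs.wordProd ω :: cs.rightInvSeq ω).count t
          = (cs.rightInvSeq ω).count t
            + if (cs.wordProd ω)⁻¹ * cs.simple i * cs.wordProd ω = t then 1 else 0 := by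
        simp [List.count_cons]
      rw [hcount]
      have hcond : (cs.wordProd ω * t * (cs.wordProd ω)⁻¹ = cs.simple i) ↔
          ((cs.wordProd ω)⁻¹ * cs.simple i * cs.wordProd ω = t) :=
        conj_eq_iff.trans eq_comm
      simp only [hcond]
      split_ifs with h
      · rw [pow_add, pow_one]
        simp [mul_assoc, mul_comm, mul_left_comm]
      · rw [add_zero]
        simp [mul_assoc]

lemma phi_apply (g t : W) (ε : ℤˣ) :
    (phi cs g) (t, ε) = (g * t * g⁻¹, eta cs g t * ε) := by
  obtain ⟨ω, -, rfl⟩ := cs.exists_reduced_word' g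
  rw [phi_wordProd]
  unfold eta
  rw [phi_wordProd]
  simp

lemma eta_mul (g h t : W) : eta cs (g * h) t = eta cs g (h * t * h⁻¹) * eta cs h t := by
  have h1 : (phi cs (g * h)) (t, 1) = (phi cs g) ((phi cs h) (t, 1)) := by
    rw [map_mul, Equiv.Perm.mul_apply]
  have h2 := phi_apply cs h t 1
  have h3 := phi_apply cs g (h * t * h⁻¹) (eta cs h t * 1)
  show ((phi cs) (g * h) (t, 1)).2 = _
  rw [h1, h2, h3]
  simp [eta, mul_comm]

lemma eta_simple (i : B) (t : W) :
    eta cs (cs.simple i) t = if t = cs.simple i then (-1 : ℤˣ) else 1 := by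
  unfold eta
  rw [phi_simple, sigmaPerm_apply]
  simp

lemma eta_one (t : W) : eta cs 1 t = 1 := by
  unfold eta
  rw [map_one]
  simp

lemma eta_inv (g t : W) : eta cs g⁻¹ t = eta cs g (g⁻¹ * t * g) := by
  have h1 : eta cs (g * g⁻¹) t = eta cs g (g⁻¹ * t * g⁻¹⁻¹) * eta cs g⁻¹ t := eta_mul cs g g⁻¹ t
  rw [mul_inv_cancel, eta_one, inv_inv] at h1
  have h2 := Int.units_mul_self (eta cs g (g⁻¹ * t * g))
  calc eta cs g⁻¹ t = (eta cs g (g⁻¹ * t * g) * eta cs g (g⁻¹ * t * g)) * eta cs g⁻¹ t := by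
        rw [h2, one_mul]
    _ = eta cs g (g⁻¹ * t * g) * (eta cs g (g⁻¹ * t * g) * eta cs g⁻¹ t) := by
        rw [mul_assoc]
    _ = eta cs g (g⁻¹ * t * g) := by rw [← h1, mul_one]

lemma eta_reflection_self {t : W} (ht : cs.IsReflection t) : eta cs t t = -1 := by
  obtain ⟨p, j, rfl⟩ := ht
  set t := p * cs.simple j * p⁻¹ with hts
  have hpt : p⁻¹ * t * p = cs.simple j := by rw [hts]; group
  have h1 : eta cs t t = eta cs (p * cs.simple j) (p⁻¹ * t * p⁻¹⁻¹) * eta cs p⁻¹ t := by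
    rw [hts]
    have : p * cs.simple j * p⁻¹ = (p * cs.simple j) * p⁻¹ := by rw [mul_assoc]
    rw [this, eta_mul]
  rw [inv_inv, hpt] at h1
  have h2 : eta cs (p * cs.simple j) (cs.simple j)
      = eta cs p (cs.simple j * cs.simple j * (cs.simple j)⁻¹) * eta cs (cs.simple j) (cs.simple j) :=
    eta_mul cs p (cs.simple j) (cs.simple j)
  have h3 : cs.simple j * cs.simple j * (cs.simple j)⁻¹ = cs.simple j := by
    rw [cs.simple_mul_simple_self, one_mul, cs.inv_simple]
  rw [h3, eta_simple, if_pos rfl] at h2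
  have h4 : eta cs p⁻¹ t = eta cs p (cs.simple j) := by rw [eta_inv, hpt]
  rw [h1, h2, h4]
  have := Int.units_mul_self (eta cs p (cs.simple j))
  calc eta cs p (cs.simple j) * (-1) * eta cs p (cs.simple j)
      = eta cs p (cs.simple j) * eta cs p (cs.simple j) * (-1) := by
        rw [mul_assoc, mul_comm (-1 : ℤˣ), ← mul_assoc]
    _ = -1 := by rw [this, one_mul]

lemma mem_ris_of_eta_neg (ω : List B) (t : W)
    (h : eta cs (cs.wordProd ω) t = -1) : t ∈ cs.rightInvSeq ω := by
  by_contra hmem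
  have hc : (cs.rightInvSeq ω).count t = 0 := List.count_eq_zero.mpr hmem
  have h2 : eta cs (cs.wordProd ω) t = 1 := by
    unfold eta
    rw [phi_wordProd, hc]
    simp
  rw [h2] at h
  exact absurd h (by decide)

lemma exists_sublist_of_mem_ris (ω : List B) (t : W) (h : t ∈ cs.rightInvSeq ω) :
    ∃ γ, γ <+ ω ∧ γ.length + 1 = ω.length ∧ cs.wordProd γ = cs.wordProd ω * t := by
  obtain ⟨j, hj, hget⟩ := List.getElem_of_mem h
  have hjω : j < ω.length := by
    have := cs.length_rightInvSeq ω
    omega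
  refine ⟨ω.eraseIdx j, List.eraseIdx_sublist ω j, List.length_eraseIdx_add_one hjω, ?_⟩
  have := cs.wordProd_mul_getD_rightInvSeq ω j
  rw [List.getD_eq_getElem _ 1 hj, hget] at this
  exact this.symm

lemma length_mul_lt_of_eta_neg (w t : W) (ht : cs.IsReflection t)
    (h : eta cs w t = -1) : cs.length (w * t) < cs.length w := by
  obtain ⟨ω, hred, rfl⟩ := cs.exists_reduced_word' w
  obtain ⟨γ, hsub, hlen, hprod⟩ := exists_sublist_of_mem_ris cs ω t
    (mem_ris_of_eta_neg cs ω t h)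
  rw [← hprod]
  calc cs.length (cs.wordProd γ) ≤ γ.length := cs.length_wordProd_le γ
    _ < ω.length := by omega
    _ = cs.length (cs.wordProd ω) := hred.symm

lemma eta_neg_of_length_mul_lt {w t : W} (ht : cs.IsReflection t)
    (h : cs.length (w * t) < cs.length w) : eta cs w t = -1 := by
  have hw : w = (w * t) * t := by rw [mul_assoc, ht.mul_self, mul_one]
  have h1 : eta cs w t = eta cs (w * t) t * (-1) := by
    nth_rewrite 1 [hw]
    rw [eta_mul]
    have htt : t * t * t⁻¹ = t := by rw [ht.mul_self, one_mul, ht.inv]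
    rw [htt, eta_reflection_self cs ht]
  have h2 : eta cs (w * t) t = 1 := by
    rcases Int.units_eq_one_or (eta cs (w * t) t) with h' | h'
    · exact h'
    · exfalso
      have := length_mul_lt_of_eta_neg cs (w * t) t ht h'
      rw [mul_assoc, ht.mul_self, mul_one] at this
      omega
  rw [h1, h2, one_mul]

/-- Strong exchange, right version, sublist form. -/
lemma strong_exchange_right {w t : W} (ht : cs.IsReflection t)
    (h : cs.length (w * t) < cs.length w) {ω : List B} (hprod : cs.wordProd ω = w) :
    ∃ γ, γ <+ ω ∧ γ.length + 1 = ω.length ∧ cs.wordProd γ = w * t := by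
  subst hprod
  exact exists_sublist_of_mem_ris cs ω t
    (mem_ris_of_eta_neg cs ω t (eta_neg_of_length_mul_lt cs ht h))

/-- Strong exchange, left version, sublist form. -/
lemma strong_exchange_left {w t : W} (ht : cs.IsReflection t)
    (h : cs.length (t * w) < cs.length w) {ω : List B} (hprod : cs.wordProd ω = w) :
    ∃ γ, γ <+ ω ∧ γ.length + 1 = ω.length ∧ cs.wordProd γ = t * w := by
  have hinv : cs.length (w⁻¹ * t) < cs.length w⁻¹ := by
    have : w⁻¹ * t = (t * w)⁻¹ := by rw [mul_inv_rev, ht.inv]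
    rw [this, cs.length_inv, cs.length_inv]
    exact h
  have hprod' : cs.wordProd ω.reverse = w⁻¹ := by rw [cs.wordProd_reverse, hprod]
  obtain ⟨γ', hsub, hlen, hp⟩ := strong_exchange_right cs ht hinv hprod'
  refine ⟨γ'.reverse, ?_, ?_, ?_⟩
  · have := hsub.reverse
    rwa [List.reverse_reverse] at this
  · rw [List.length_reverse]
    rw [List.length_reverse] at hlen
    exact hlen
  · rw [cs.wordProd_reverse, hp, mul_inv_rev, inv_inv, ht.inv]

/-- Deletion property: every word has a reduced sublist with the same product. -/
lemma exists_reduced_sublist (ω : List B) :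
    ∃ γ, γ <+ ω ∧ cs.IsReduced γ ∧ cs.wordProd γ = cs.wordProd ω := by
  suffices H : ∀ n (ω : List B), ω.length ≤ n →
      ∃ γ, γ <+ ω ∧ cs.IsReduced γ ∧ cs.wordProd γ = cs.wordProd ω from
    H ω.length ω le_rfl
  intro n
  induction n with
  | zero =>
    intro ω hlen
    have : ω = [] := List.length_eq_zero_iff.mp (by omega)
    subst this
    exact ⟨[], List.Sublist.refl _, by simp [CoxeterSystem.IsReduced], rfl⟩
  | succ n ih =>
    intro ω hlen
    match ω with
    | [] => exact ⟨[], List.Sublist.refl _, by simp [CoxeterSystem.IsReduced], rfl⟩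
    | a :: α =>
      obtain ⟨α', hsub, hred, hprodeq⟩ := ih α (by simp at hlen; omega)
      by_cases hred2 : cs.IsReduced (a :: α')
      · exact ⟨a :: α', hsub.cons₂ a, hred2,
          by rw [cs.wordProd_cons, cs.wordProd_cons, hprodeq]⟩
      · have hlt : cs.length (cs.simple a * cs.wordProd α') < cs.length (cs.wordProd α') := by
          rcases cs.length_simple_mul (cs.wordProd α') a with hup | hdn
          · exfalso
            apply hred2
            unfold CoxeterSystem.IsReduced
            rw [cs.wordProd_cons, hup, hred]
            simp
          · unfold CoxeterSystem.IsReduced at hred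
            omega
        obtain ⟨γ, hγsub, hγlen, hγprod⟩ :=
          strong_exchange_left cs (cs.isReflection_simple a) hlt (rfl (a := cs.wordProd α'))
        have hγn : γ.length ≤ n := by
          have h1 := hsub.length_le
          simp at hlen
          omega
        obtain ⟨γ', h1, h2, h3⟩ := ih γ hγn
        refine ⟨γ', ?_, h2, ?_⟩
        · exact (h1.trans (hγsub.trans hsub)).trans (List.sublist_cons_self a α)
        · rw [h3, hγprod, cs.wordProd_cons, hprodeq]

end Eta

/-! ## Bruhat order basics -/

section Bruhat

variable (cs : CoxeterSystem M W)

lemma bruhat_refl (w : W) : BruhatLE cs w w := Relation.ReflTransGen.refl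

lemma bruhat_trans {u v w : W} (h1 : BruhatLE cs u v) (h2 : BruhatLE cs v w) :
    BruhatLE cs u w := Relation.ReflTransGen.trans h1 h2

lemma length_le_of_bruhatLE {v w : W} (h : BruhatLE cs v w) : cs.length v ≤ cs.length w := by
  induction h with
  | refl => exact le_rfl
  | tail _ hstep ih =>
    obtain ⟨t, -, -, hlt⟩ := hstep
    omega

lemma eq_of_bruhatLE_of_length_le {v w : W} (h : BruhatLE cs v w)
    (hl : cs.length w ≤ cs.length v) : v = w := by
  rcases Relation.ReflTransGen.cases_tail h with heq | ⟨c, hvc, hstep⟩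
  · exact heq.symm
  · obtain ⟨t, -, -, hlt⟩ := hstep
    have := length_le_of_bruhatLE cs hvc
    omega

lemma le_simple_mul {w : W} {i : B} (h : cs.length w < cs.length (cs.simple i * w)) :
    BruhatLE cs w (cs.simple i * w) :=
  Relation.ReflTransGen.single ⟨cs.simple i, cs.isReflection_simple i, rfl, h⟩

lemma le_mul_simple {w : W} {j : B} (h : cs.length w < cs.length (w * cs.simple j)) :
    BruhatLE cs w (w * cs.simple j) := by
  refine Relation.ReflTransGen.single ⟨w * cs.simple j * w⁻¹, ⟨w, j, rfl⟩, ?_, h⟩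
  group

lemma simple_mul_le {w : W} {i : B} (h : cs.length (cs.simple i * w) < cs.length w) :
    BruhatLE cs (cs.simple i * w) w :=
  Relation.ReflTransGen.single ⟨cs.simple i, cs.isReflection_simple i,
    (cs.simple_mul_simple_cancel_left i).symm, h⟩

lemma mul_simple_le {w : W} {j : B} (h : cs.length (w * cs.simple j) < cs.length w) :
    BruhatLE cs (w * cs.simple j) w := by
  refine Relation.ReflTransGen.single ⟨w * cs.simple j * w⁻¹, ⟨w, j, rfl⟩, ?_, h⟩
  simp only [mul_assoc, inv_mul_cancel_left]
  rw [cs.simple_mul_simple_self, mul_one]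

lemma bruhatLE_inv {v w : W} (h : BruhatLE cs v w) : BruhatLE cs v⁻¹ w⁻¹ := by
  refine Relation.ReflTransGen.lift (p := Step cs) (fun x => x⁻¹) ?_ _ _ h
  rintro a b ⟨t, ht, rfl, hlen⟩
  refine ⟨a⁻¹ * t * a, ?_, ?_, ?_⟩
  · have := ht.conj a⁻¹
    rwa [inv_inv] at this
  · show (t * a)⁻¹ = a⁻¹ * t * a * a⁻¹
    rw [mul_inv_rev, ht.inv]
    group
  · show cs.length a⁻¹ < cs.length (t * a)⁻¹
    rw [cs.length_inv, cs.length_inv]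
    exact hlen

lemma one_bruhatLE (w : W) : BruhatLE cs 1 w := by
  suffices H : ∀ n (w : W), cs.length w ≤ n → BruhatLE cs 1 w from H (cs.length w) w le_rfl
  intro n
  induction n with
  | zero =>
    intro w hw
    have : w = 1 := cs.length_eq_zero_iff.mp (by omega)
    rw [this]
    exact bruhat_refl cs 1
  | succ n ih =>
    intro w hw
    by_cases hone : w = 1
    · rw [hone]
      exact bruhat_refl cs 1
    · obtain ⟨i, hi⟩ := cs.exists_leftDescent_of_ne_one hone
      have h1 : BruhatLE cs 1 (cs.simple i * w) := ih _ (by unfold CoxeterSystem.IsLeftDescent at hi; omega)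
      exact bruhat_trans cs h1 (simple_mul_le cs hi)

lemma wordProd_take_le {ω : List B} (hred : cs.IsReduced ω) (k : ℕ) :
    BruhatLE cs (cs.wordProd (ω.take k)) (cs.wordProd ω) := by
  rcases le_or_gt ω.length k with hk | hk
  · rw [List.take_of_length_le hk]
    exact bruhat_refl cs _
  · suffices H : ∀ d k, k + d = ω.length →
        BruhatLE cs (cs.wordProd (ω.take k)) (cs.wordProd ω) by
      exact H (ω.length - k) k (by omega)
    intro d
    induction d with
    | zero =>
      intro k hk
      rw [show k = ω.length by omega, List.take_length]
      exact bruhat_refl cs _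
    | succ d ihd =>
      intro k hk
      have hklt : k < ω.length := by omega
      have hstep : cs.wordProd (ω.take (k + 1)) = cs.wordProd (ω.take k) * cs.simple ω[k] := by
        rw [List.take_succ, List.getElem?_eq_getElem hklt]
        rw [cs.wordProd_append]
        congr 1
        simp [cs.wordProd_cons, cs.wordProd_nil]
      have hlk : cs.length (cs.wordProd (ω.take k)) = k := by
        have := CoxeterSystem.IsReduced.take hred k
        unfold CoxeterSystem.IsReduced at this
        rw [this, List.length_take]
        omega
      have hlk1 : cs.length (cs.wordProd (ω.take (k + 1))) = k + 1 := by
        have := CoxeterSystem.IsReduced.take hred (k + 1)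
        unfold CoxeterSystem.IsReduced at this
        rw [this, List.length_take]
        omega
      have h1 : BruhatLE cs (cs.wordProd (ω.take k)) (cs.wordProd (ω.take (k + 1))) := by
        rw [hstep]
        apply le_mul_simple
        rw [← hstep, hlk, hlk1]
        omega
      exact bruhat_trans cs h1 (ihd (k + 1) (by omega))

lemma simple_le_of_isLeftDescent {v : W} {i : B} (h : cs.IsLeftDescent v i) :
    BruhatLE cs (cs.simple i) v := by
  obtain ⟨β, hred, hprod⟩ := cs.exists_reduced_word' (cs.simple i * v)
  have hv : cs.wordProd (i :: β) = v := by
    rw [cs.wordProd_cons, ← hprod, cs.simple_mul_simple_cancel_left]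
  have hup : cs.length (cs.simple i * v) + 1 = cs.length v :=
    (cs.length_simple_mul v i).resolve_left (by unfold CoxeterSystem.IsLeftDescent at h; omega)
  have hred2 : cs.IsReduced (i :: β) := by
    unfold CoxeterSystem.IsReduced at hred ⊢
    rw [hv, List.length_cons, ← hred, ← hprod]
    omega
  have := wordProd_take_le cs hred2 1
  rw [hv] at this
  have h1 : cs.wordProd ((i :: β).take 1) = cs.simple i := by
    simp [cs.wordProd_cons, cs.wordProd_nil]
  rwa [h1] at this

lemma simple_le_of_isRightDescent {v : W} {j : B} (h : cs.IsRightDescent v j) :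
    BruhatLE cs (cs.simple j) v := by
  have h1 : cs.IsLeftDescent v⁻¹ j := cs.isLeftDescent_inv_iff.mpr h
  have h2 := bruhatLE_inv cs (simple_le_of_isLeftDescent cs h1)
  rwa [cs.inv_simple, inv_inv] at h2

/-! ### The lifting property -/

theorem liftL : ∀ (w v : W) (i : B), cs.IsLeftDescent w i → BruhatLE cs v w →
    ¬ cs.IsLeftDescent v i → BruhatLE cs v (cs.simple i * w) := by
  suffices H : ∀ n (w v : W) (i : B), cs.length w ≤ n → cs.IsLeftDescent w i →
      BruhatLE cs v w → ¬ cs.IsLeftDescent v i → BruhatLE cs v (cs.simple i * w) from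
    fun w v i hd hvw hv => H (cs.length w) w v i le_rfl hd hvw hv
  intro n
  induction n with
  | zero =>
    intro w v i hwn hd _ _
    unfold CoxeterSystem.IsLeftDescent at hd
    omega
  | succ n ih =>
    intro w v i hwn hd hvw hv
    have hlenw : cs.length (cs.simple i * w) + 1 = cs.length w :=
      (cs.length_simple_mul w i).resolve_left
        (by unfold CoxeterSystem.IsLeftDescent at hd; omega)
    rcases Relation.ReflTransGen.cases_tail hvw with heq | ⟨u, hvu, hstep⟩
    · exact absurd (heq ▸ hd) hv
    · obtain ⟨t, ht, hwt, hlen⟩ := hstep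
      have htw : t * w = u := by rw [hwt, ← mul_assoc, ht.mul_self, one_mul]
      have hpar : cs.length w % 2 ≠ cs.length u % 2 := by
        have h2 := cs.length_mul_mod_two t u
        rw [← hwt] at h2
        obtain ⟨m, hm⟩ := ht.odd_length
        omega
      by_cases hts : t = cs.simple i
      · have hu : cs.simple i * w = u := by
          rw [hwt, hts, cs.simple_mul_simple_cancel_left]
        rwa [hu]
      · rcases cs.length_simple_mul u i with hup | hdn
        · -- ascent of u
          by_cases hcase : cs.length u + 1 = cs.length w
          · -- exchange case
            obtain ⟨β, hβred, hβprod⟩ := cs.exists_reduced_word' (cs.simple i * w)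
            have hwrd : cs.wordProd (i :: β) = w := by
              rw [cs.wordProd_cons, ← hβprod, cs.simple_mul_simple_cancel_left]
            have hβlen : β.length + 1 = cs.length w := by
              unfold CoxeterSystem.IsReduced at hβred
              rw [← hβred, ← hβprod]
              omega
            have hlt : cs.length (t * w) < cs.length w := by rw [htw]; omega
            obtain ⟨γ, hγsub, hγlen, hγprod⟩ := strong_exchange_left cs ht hlt hwrd
            cases hγsub with
            | cons _ h' =>
              have hγβ : γ = β := h'.eq_of_length (by simp at hγlen; omega)
              have hu : u = cs.simple i * w := by
                rw [← htw, ← hγprod, hγβ, ← hβprod]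
              rw [← hu]
              exact hvu
            | cons_cons _ h' =>
              exfalso
              rename_i γ'
              have hsu : cs.wordProd γ' = cs.simple i * u := by
                rw [← htw, ← hγprod, cs.wordProd_cons, cs.simple_mul_simple_cancel_left]
              have h5 : cs.length (cs.simple i * u) ≤ γ'.length := by
                rw [← hsu]; exact cs.length_wordProd_le γ'
              simp only [List.length_cons] at hγlen
              omega
          · -- ℓ u + 1 < ℓ w
            have h1 : BruhatLE cs u (cs.simple i * u) := le_simple_mul cs (by omega)
            have h2 : Step cs (cs.simple i * u) (cs.simple i * w) := by
              refine ⟨cs.simple i * t * cs.simple i, ?_, ?_, ?_⟩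
              · have := ht.conj (cs.simple i)
                rwa [cs.inv_simple] at this
              · rw [hwt]
                simp only [mul_assoc, cs.simple_mul_simple_cancel_left]
              · omega
            exact bruhat_trans cs (bruhat_trans cs hvu h1) (Relation.ReflTransGen.single h2)
        · -- descent of u : induct
          have h3 : BruhatLE cs v (cs.simple i * u) :=
            ih u v i (by omega) (by unfold CoxeterSystem.IsLeftDescent; omega) hvu hv
          have h4 : Step cs (cs.simple i * u) (cs.simple i * w) := by
            refine ⟨cs.simple i * t * cs.simple i, ?_, ?_, ?_⟩
            · have := ht.conj (cs.simple i)
              rwa [cs.inv_simple] at this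
            · rw [hwt]
              simp only [mul_assoc, cs.simple_mul_simple_cancel_left]
            · omega
          exact bruhat_trans cs h3 (Relation.ReflTransGen.single h4)

theorem liftR (w v : W) (j : B) (hd : cs.IsRightDescent w j) (hvw : BruhatLE cs v w)
    (hv : ¬ cs.IsRightDescent v j) : BruhatLE cs v (w * cs.simple j) := by
  have h1 := liftL cs w⁻¹ v⁻¹ j (cs.isLeftDescent_inv_iff.mpr hd) (bruhatLE_inv cs hvw)
    (fun h => hv (cs.isLeftDescent_inv_iff.mp h))
  have h2 := bruhatLE_inv cs h1
  rwa [inv_inv, mul_inv_rev, inv_inv, cs.inv_simple] at h2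

end Bruhat

/-! ## Parabolic subgroups -/

section Parabolic

variable (cs : CoxeterSystem M W)

lemma simple_mem_parabolic {I : Set B} {i : B} (h : i ∈ I) :
    cs.simple i ∈ parabolic cs I :=
  Subgroup.subset_closure ⟨i, h, rfl⟩

lemma wordProd_mem_parabolic {I : Set B} {ω : List B} (h : ∀ i ∈ ω, i ∈ I) :
    cs.wordProd ω ∈ parabolic cs I := by
  induction ω with
  | nil => rw [cs.wordProd_nil]; exact one_mem _
  | cons a α ih =>
    rw [cs.wordProd_cons]
    exact mul_mem (simple_mem_parabolic cs (h a (List.mem_cons_self (a := a) (l := α))))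
      (ih (fun i hi => h i (List.mem_cons_of_mem a hi)))

lemma exists_reduced_word_parabolic {I : Set B} {x : W} (hx : x ∈ parabolic cs I) :
    ∃ ω, (∀ i ∈ ω, i ∈ I) ∧ cs.IsReduced ω ∧ x = cs.wordProd ω := by
  have H : ∃ ω, (∀ i ∈ ω, i ∈ I) ∧ x = cs.wordProd ω := by
    induction hx using Subgroup.closure_induction with
    | mem x hx =>
      obtain ⟨i, hi, rfl⟩ := hx
      exact ⟨[i], by simpa using hi, by simp [cs.wordProd_cons, cs.wordProd_nil]⟩
    | one => exact ⟨[], by simp, (cs.wordProd_nil).symm⟩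
    | mul x y _ _ ihx ihy =>
      obtain ⟨ωx, hx1, rfl⟩ := ihx
      obtain ⟨ωy, hy1, rfl⟩ := ihy
      exact ⟨ωx ++ ωy, by
        intro i hi
        rcases List.mem_append.mp hi with h' | h'
        · exact hx1 i h'
        · exact hy1 i h', (cs.wordProd_append ωx ωy).symm⟩
    | inv x _ ihx =>
      obtain ⟨ω, h1, rfl⟩ := ihx
      exact ⟨ω.reverse, fun i hi => h1 i (List.mem_reverse.mp hi),
        (cs.wordProd_reverse ω).symm⟩
  obtain ⟨ω, hmem, rfl⟩ := H
  obtain ⟨γ, hsub, hred, hprod⟩ := exists_reduced_sublist cs ω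
  exact ⟨γ, fun i hi => hmem i (hsub.subset hi), hred, hprod.symm⟩

lemma parabolic_head {I : Set B} {x : W} (hx : x ∈ parabolic cs I) (hne : x ≠ 1) :
    ∃ i ∈ I, cs.IsLeftDescent x i ∧ cs.simple i * x ∈ parabolic cs I := by
  obtain ⟨ω, hmem, hred, rfl⟩ := exists_reduced_word_parabolic cs hx
  match ω with
  | [] => exact absurd (cs.wordProd_nil) hne
  | a :: α =>
    refine ⟨a, hmem a (List.mem_cons_self (a := a) (l := α)), ?_, ?_⟩
    · unfold CoxeterSystem.IsLeftDescent
      rw [cs.wordProd_cons, cs.simple_mul_simple_cancel_left]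
      have hred' : cs.length (cs.simple a * cs.wordProd α) = α.length + 1 := by
        rw [← cs.wordProd_cons]
        unfold CoxeterSystem.IsReduced at hred
        rw [hred]
        simp
      have h1 := cs.length_wordProd_le α
      omega
    · rw [cs.wordProd_cons, cs.simple_mul_simple_cancel_left]
      exact wordProd_mem_parabolic cs (fun i hi => hmem i (List.mem_cons_of_mem a hi))

lemma parabolic_last {I : Set B} {x : W} (hx : x ∈ parabolic cs I) (hne : x ≠ 1) :
    ∃ j ∈ I, cs.IsRightDescent x j ∧ x * cs.simple j ∈ parabolic cs I := by
  obtain ⟨ω, hmem, hred, rfl⟩ := exists_reduced_word_parabolic cs hx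
  rcases List.eq_nil_or_concat' ω with rfl | ⟨L, b, rfl⟩
  · exact absurd (cs.wordProd_nil) hne
  · refine ⟨b, hmem b (by simp), ?_, ?_⟩
    · unfold CoxeterSystem.IsRightDescent
      have hx2 : cs.wordProd (L ++ [b]) * cs.simple b = cs.wordProd L := by
        rw [cs.wordProd_append]
        simp [cs.wordProd_cons, cs.wordProd_nil, mul_assoc, cs.simple_mul_simple_self]
      rw [hx2]
      unfold CoxeterSystem.IsReduced at hred
      have h1 := cs.length_wordProd_le L
      rw [hred]
      simp only [List.length_append, List.length_cons, List.length_nil]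
      omega
    · have hx2 : cs.wordProd (L ++ [b]) * cs.simple b = cs.wordProd L := by
        rw [cs.wordProd_append]
        simp [cs.wordProd_cons, cs.wordProd_nil, mul_assoc, cs.simple_mul_simple_self]
      rw [hx2]
      exact wordProd_mem_parabolic cs (fun i hi => hmem i (by simp [hi]))

end Parabolic

/-! ## Double cosets -/

section DoubleCoset

variable (cs : CoxeterSystem M W)

lemma self_mem_doubleCoset (I J : Set B) (w : W) : w ∈ doubleCoset cs I J w :=
  ⟨1, one_mem _, 1, one_mem _, by simp⟩

lemma doubleCoset_mul_left {I J : Set B} {w z : W} {i : B} (hi : i ∈ I)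
    (hz : z ∈ doubleCoset cs I J w) : cs.simple i * z ∈ doubleCoset cs I J w := by
  obtain ⟨x, hx, y, hy, rfl⟩ := hz
  exact ⟨cs.simple i * x, mul_mem (simple_mem_parabolic cs hi) hx, y, hy, by
    simp [mul_assoc]⟩

lemma doubleCoset_mul_right {I J : Set B} {w z : W} {j : B} (hj : j ∈ J)
    (hz : z ∈ doubleCoset cs I J w) : z * cs.simple j ∈ doubleCoset cs I J w := by
  obtain ⟨x, hx, y, hy, rfl⟩ := hz
  exact ⟨x, hx, y * cs.simple j, mul_mem hy (simple_mem_parabolic cs hj), by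
    simp [mul_assoc]⟩

lemma mem_doubleCoset_symm {I J : Set B} {w z₁ z₂ : W}
    (h1 : z₁ ∈ doubleCoset cs I J w) (h2 : z₂ ∈ doubleCoset cs I J w) :
    z₂ ∈ doubleCoset cs I J z₁ := by
  obtain ⟨x₁, hx₁, y₁, hy₁, rfl⟩ := h1
  obtain ⟨x₂, hx₂, y₂, hy₂, rfl⟩ := h2
  exact ⟨x₂ * x₁⁻¹, mul_mem hx₂ (inv_mem hx₁), y₁⁻¹ * y₂, mul_mem (inv_mem hy₁) hy₂, by
    group⟩

/-- An element with no descents towards `I` (left) and `J` (right) is below every element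
of its double coset. -/
theorem le_doubleCoset_of_reduced {I J : Set B} {u : W}
    (hul : ∀ i ∈ I, ¬ cs.IsLeftDescent u i) (hur : ∀ j ∈ J, ¬ cs.IsRightDescent u j) :
    ∀ z ∈ doubleCoset cs I J u, BruhatLE cs u z := by
  suffices H : ∀ n (x y : W), x ∈ parabolic cs I → y ∈ parabolic cs J →
      cs.length x + cs.length y ≤ n → BruhatLE cs u (x * u * y) by
    rintro z ⟨x, hx, y, hy, rfl⟩
    exact H (cs.length x + cs.length y) x y hx hy le_rfl
  intro n
  induction n with
  | zero =>
    intro x y hx hy hn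
    have hx1 : x = 1 := cs.length_eq_zero_iff.mp (by omega)
    have hy1 : y = 1 := cs.length_eq_zero_iff.mp (by omega)
    rw [hx1, hy1, one_mul, mul_one]
    exact bruhat_refl cs u
  | succ n ih =>
    intro x y hx hy hn
    by_cases hx1 : x = 1
    · subst hx1
      by_cases hy1 : y = 1
      · subst hy1
        rw [one_mul, mul_one]
        exact bruhat_refl cs u
      · obtain ⟨j, hjJ, hdesc, hmem⟩ := parabolic_last cs hy hy1
        have hyy : y = (y * cs.simple j) * cs.simple j := by
          rw [mul_assoc, cs.simple_mul_simple_self, mul_one]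
        have hih : BruhatLE cs u (1 * u * (y * cs.simple j)) := by
          apply ih 1 (y * cs.simple j) (one_mem _) hmem
          unfold CoxeterSystem.IsRightDescent at hdesc
          rw [cs.length_one] at hn ⊢
          omega
        rw [one_mul] at hih ⊢
        have hgoal : u * y = (u * (y * cs.simple j)) * cs.simple j := by
          simp [mul_assoc, cs.simple_mul_simple_self]
        rw [hgoal]
        rcases cs.length_mul_simple (u * (y * cs.simple j)) j with hup | hdn
        · exact bruhat_trans cs hih (le_mul_simple cs (by omega))
        · exact liftR cs (u * (y * cs.simple j)) u j
            (by unfold CoxeterSystem.IsRightDescent; omega) hih (hur j hjJ)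
    · obtain ⟨i, hiI, hdesc, hmem⟩ := parabolic_head cs hx hx1
      have hxx : x = cs.simple i * (cs.simple i * x) := (cs.simple_mul_simple_cancel_left i).symm
      have hih : BruhatLE cs u ((cs.simple i * x) * u * y) := by
        apply ih (cs.simple i * x) y hmem hy
        unfold CoxeterSystem.IsLeftDescent at hdesc
        omega
      have hgoal : x * u * y = cs.simple i * ((cs.simple i * x) * u * y) := by
        simp only [mul_assoc, cs.simple_mul_simple_cancel_left]
      rw [hgoal]
      rcases cs.length_simple_mul ((cs.simple i * x) * u * y) i with hup | hdn
      · exact bruhat_trans cs hih (le_simple_mul cs (by omega))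
      · exact liftL cs ((cs.simple i * x) * u * y) u i
          (by unfold CoxeterSystem.IsLeftDescent; omega) hih (hul i hiI)

end DoubleCoset

/-- If `w` is separated (its descents avoid the support of `P_↓(w)`), then
`B_↓(w) = [e, P_↓(w)]`. -/
theorem separated_lowerQuotient_eq_interval (cs : CoxeterSystem M W) (w pw : W)
    (hpw : pw ∈ bCoset cs w w)
    (hpw_min : ∀ x ∈ bCoset cs w w, cs.length pw ≤ cs.length x)
    (hsepL : leftDescents cs w ∩ support cs pw = ∅)
    (hsepR : rightDescents cs w ∩ support cs pw = ∅) :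
    {v : W | BruhatLE cs v w ∧ (∀ i ∈ leftDescents cs w, ¬ cs.IsLeftDescent v i) ∧
        (∀ i ∈ rightDescents cs w, ¬ cs.IsRightDescent v i)}
      = {v : W | BruhatLE cs v pw} := by
  have hpwl : ∀ i ∈ leftDescents cs w, ¬ cs.IsLeftDescent pw i := by
    intro i hi hdesc
    have hmem : cs.simple i * pw ∈ bCoset cs w w := doubleCoset_mul_left cs hi hpw
    have := hpw_min _ hmem
    unfold CoxeterSystem.IsLeftDescent at hdesc
    omega
  have hpwr : ∀ j ∈ rightDescents cs w, ¬ cs.IsRightDescent pw j := by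
    intro j hj hdesc
    have hmem : pw * cs.simple j ∈ bCoset cs w w := doubleCoset_mul_right cs hj hpw
    have := hpw_min _ hmem
    unfold CoxeterSystem.IsRightDescent at hdesc
    omega
  have hpw_le : ∀ z ∈ bCoset cs w w, BruhatLE cs pw z := by
    intro z hz
    exact le_doubleCoset_of_reduced cs hpwl hpwr z (mem_doubleCoset_symm cs hpw hz)
  have hpw_w : BruhatLE cs pw w := hpw_le w (self_mem_doubleCoset cs _ _ w)
  ext v
  simp only [Set.mem_setOf_eq]
  constructor
  · rintro ⟨hvw, hL, hR⟩
    have final : ∀ w', w' ∈ bCoset cs w w →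
        (∀ i ∈ leftDescents cs w, ¬ cs.IsLeftDescent w' i) →
        (∀ j ∈ rightDescents cs w, ¬ cs.IsRightDescent w' j) →
        BruhatLE cs v w' → BruhatLE cs v pw := by
      intro w' hmem hnl hnr hv'
      have h1 : BruhatLE cs w' pw :=
        le_doubleCoset_of_reduced cs hnl hnr pw (mem_doubleCoset_symm cs hmem hpw)
      have h2 : cs.length pw ≤ cs.length w' := hpw_min w' hmem
      have h3 : w' = pw := eq_of_bruhatLE_of_length_le cs h1 h2
      exact h3 ▸ hv'
    suffices H : ∀ n (w' : W), cs.length w' ≤ n → w' ∈ bCoset cs w w →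
        BruhatLE cs v w' → BruhatLE cs v pw from
      H (cs.length w) w le_rfl (self_mem_doubleCoset cs _ _ w) hvw
    intro n
    induction n with
    | zero =>
      intro w' hn hmem hv'
      refine final w' hmem ?_ ?_ hv'
      · intro i _ hdesc
        unfold CoxeterSystem.IsLeftDescent at hdesc
        omega
      · intro j _ hdesc
        unfold CoxeterSystem.IsRightDescent at hdesc
        omega
    | succ n ih =>
      intro w' hn hmem hv'
      by_cases hLd : ∃ i ∈ leftDescents cs w, cs.IsLeftDescent w' i
      · obtain ⟨i, hi, hdesc⟩ := hLd
        have hv2 : BruhatLE cs v (cs.simple i * w') := liftL cs w' v i hdesc hv' (hL i hi)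
        refine ih (cs.simple i * w') ?_ (doubleCoset_mul_left cs hi hmem) hv2
        unfold CoxeterSystem.IsLeftDescent at hdesc
        omega
      · by_cases hRd : ∃ j ∈ rightDescents cs w, cs.IsRightDescent w' j
        · obtain ⟨j, hj, hdesc⟩ := hRd
          have hv2 : BruhatLE cs v (w' * cs.simple j) := liftR cs w' v j hdesc hv' (hR j hj)
          refine ih (w' * cs.simple j) ?_ (doubleCoset_mul_right cs hj hmem) hv2
          unfold CoxeterSystem.IsRightDescent at hdesc
          omega
        · push_neg at hLd hRd
          exact final w' hmem hLd hRd hv'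
  · intro hvpw
    refine ⟨bruhat_trans cs hvpw hpw_w, ?_, ?_⟩
    · intro i hi hdesc
      have h1 : BruhatLE cs (cs.simple i) pw :=
        bruhat_trans cs (simple_le_of_isLeftDescent cs hdesc) hvpw
      have h2 : i ∈ leftDescents cs w ∩ support cs pw := ⟨hi, h1⟩
      rw [hsepL] at h2
      exact h2
    · intro j hj hdesc
      have h1 : BruhatLE cs (cs.simple j) pw :=
        bruhat_trans cs (simple_le_of_isRightDescent cs hdesc) hvpw
      have h2 : j ∈ rightDescents cs w ∩ support cs pw := ⟨hj, h1⟩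
      rw [hsepR] at h2
      exact h2

end CoxeterBruhat
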